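/- Let G, a, m1, m2 be positive reals and set ω = √(G(m1+m2)/a³). Define x, y : ℝ → ℝ² by x(t) = (−m2·a/(m1+m2))·(cos(ωt), sin(ωt)) and y(t) = (m1·a/(m1+m2))·(cos(ωt), sin(ωt)). Then for all t, x''(t) = (m2·G/‖x(t)−y(t)‖³)·(y(t)−x(t)) and y''(t) = (m1·G/‖y(t)−x(t)‖³)·(x(t)−y(t)); i.e., (x,y) is a solution of the two-body problem. -/

import Mathlib

def tbe0 : EuclideanSpace ℝ (Fin 2) := WithLp.toLp 2 ![1,0]
def tbe1 : EuclideanSpace ℝ (Fin 2) := WithLp.toLp 2 ![0,1]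

noncomputable def tbF (ω p q r s : ℝ) : ℝ → EuclideanSpace ℝ (Fin 2) :=
  fun t => (p * Real.cos (ω*t) + q * Real.sin (ω*t)) • tbe0
    + (r * Real.cos (ω*t) + s * Real.sin (ω*t)) • tbe1

lemma tbF_apply_eq (ω p q r s t : ℝ) (h1 : q = 0) (h2 : r = 0) (h3 : s = p) :
    tbF ω p q r s t
      = p • (WithLp.toLp 2 ![Real.cos (ω*t), Real.sin (ω*t)] : EuclideanSpace ℝ (Fin 2)) := by
  subst h1 h2 h3
  ext i
  fin_cases i <;> simp [tbF, tbe0, tbe1]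

lemma tbF_hasDerivAt (ω p q r s t : ℝ) :
    HasDerivAt (tbF ω p q r s) (tbF ω (q*ω) (-(p*ω)) (s*ω) (-(r*ω)) t) t := by
  have hc : HasDerivAt (fun t : ℝ => Real.cos (ω*t)) (-Real.sin (ω*t) * ω) t := by
    simpa [Function.comp_def] using (Real.hasDerivAt_cos (ω*t)).comp t ((hasDerivAt_id t).const_mul ω)
  have hs : HasDerivAt (fun t : ℝ => Real.sin (ω*t)) (Real.cos (ω*t) * ω) t := by
    simpa [Function.comp_def] using (Real.hasDerivAt_sin (ω*t)).comp t ((hasDerivAt_id t).const_mul ω)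
  have h1 := (((hc.const_mul p).add (hs.const_mul q)).smul_const
    tbe0)
  have h2 := (((hc.const_mul r).add (hs.const_mul s)).smul_const
    tbe1)
  have h := h1.add h2
  unfold tbF
  have e1 : q*ω * Real.cos (ω*t) + (-(p*ω)) * Real.sin (ω*t)
      = p * (-Real.sin (ω*t) * ω) + q * (Real.cos (ω*t) * ω) := by ring
  have e2 : s*ω * Real.cos (ω*t) + (-(r*ω)) * Real.sin (ω*t)
      = r * (-Real.sin (ω*t) * ω) + s * (Real.cos (ω*t) * ω) := by ring
  rw [e1, e2]
  exact h

lemma tbF_deriv (ω p q r s : ℝ) :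
    deriv (tbF ω p q r s) = tbF ω (q*ω) (-(p*ω)) (s*ω) (-(r*ω)) :=
  funext fun t => (tbF_hasDerivAt ω p q r s t).deriv

/-- **Circular solutions of the two body problem.**
For positive reals `G, a, m1, m2` and `ω = √(G(m1+m2)/a³)`, the circular motions
`x(t) = (−m2·a/(m1+m2))·(cos ωt, sin ωt)` and `y(t) = (m1·a/(m1+m2))·(cos ωt, sin ωt)`
solve the two-body ODE `x'' = m2·G·(y−x)/‖x−y‖³`, `y'' = m1·G·(x−y)/‖y−x‖³`. -/
theorem two_body_circular_solution
    (G a m1 m2 : ℝ) (hG : 0 < G) (ha : 0 < a) (hm1 : 0 < m1) (hm2 : 0 < m2)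
    (ω : ℝ) (hω : ω = Real.sqrt (G * (m1 + m2) / a ^ 3))
    (x y : ℝ → EuclideanSpace ℝ (Fin 2))
    (hx : ∀ t, x t = (-(m2 * a) / (m1 + m2)) •
      (WithLp.toLp 2 ![Real.cos (ω * t), Real.sin (ω * t)] : EuclideanSpace ℝ (Fin 2)))
    (hy : ∀ t, y t = ((m1 * a) / (m1 + m2)) •
      (WithLp.toLp 2 ![Real.cos (ω * t), Real.sin (ω * t)] : EuclideanSpace ℝ (Fin 2))) :
    ∀ t, deriv (deriv x) t = ((m2 * G) / ‖x t - y t‖ ^ 3) • (y t - x t) ∧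
      deriv (deriv y) t = ((m1 * G) / ‖y t - x t‖ ^ 3) • (x t - y t) := by
  intro t
  have hsum : (0:ℝ) < m1 + m2 := by positivity
  have hω2 : ω * ω = G * (m1 + m2) / a ^ 3 := by
    rw [hω]; exact Real.mul_self_sqrt (by positivity)
  set c : EuclideanSpace ℝ (Fin 2) := WithLp.toLp 2 ![Real.cos (ω*t), Real.sin (ω*t)] with hc
  set rx : ℝ := -(m2 * a) / (m1 + m2) with hrx
  set ry : ℝ := (m1 * a) / (m1 + m2) with hry
  have hcn : ‖c‖ = 1 := by
    rw [EuclideanSpace.norm_eq, hc]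
    simp [Fin.sum_univ_two]
  have hx' : x = tbF ω rx 0 0 rx := by
    funext u
    rw [hx u, tbF_apply_eq ω rx 0 0 rx u rfl rfl rfl]
  have hy' : y = tbF ω ry 0 0 ry := by
    funext u
    rw [hy u, tbF_apply_eq ω ry 0 0 ry u rfl rfl rfl]
  have hsubxy : x t - y t = (-a) • c := by
    rw [hx t, hy t, ← sub_smul]
    congr 1
    rw [hrx, hry]
    field_simp
    ring
  have hsubyx : y t - x t = a • c := by
    rw [hy t, hx t, ← sub_smul]
    congr 1
    rw [hrx, hry]
    field_simp
    ring
  have hnormxy : ‖x t - y t‖ = a := by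
    rw [hsubxy, norm_smul, hcn]
    simp [abs_of_pos ha]
  have hnormyx : ‖y t - x t‖ = a := by
    rw [hsubyx, norm_smul, hcn]
    simp [abs_of_pos ha]
  have hddx : deriv (deriv x) t = (-(rx*ω)*ω) • c := by
    rw [hx', tbF_deriv, tbF_deriv,
      tbF_apply_eq ω (-(rx*ω)*ω) (-(0*ω*ω)) (-(0*ω)*ω) (-(rx*ω*ω)) t
        (by ring) (by ring) (by ring)]
  have hddy : deriv (deriv y) t = (-(ry*ω)*ω) • c := by
    rw [hy', tbF_deriv, tbF_deriv,
      tbF_apply_eq ω (-(ry*ω)*ω) (-(0*ω*ω)) (-(0*ω)*ω) (-(ry*ω*ω)) t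
        (by ring) (by ring) (by ring)]
  constructor
  · rw [hddx, hnormxy, hsubyx, smul_smul]
    congr 1
    rw [hrx]
    have h1 : -(-(m2 * a) / (m1 + m2) * ω) * ω = (m2 * a / (m1 + m2)) * (ω * ω) := by ring
    rw [h1, hω2]
    field_simp
  · rw [hddy, hnormyx, hsubxy, smul_smul]
    congr 1
    rw [hry]
    have h1 : -(m1 * a / (m1 + m2) * ω) * ω = -((m1 * a / (m1 + m2)) * (ω * ω)) := by ring
    rw [h1, hω2]
    field_simp
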